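/- Let L₁ ⊆ ℝ^n and L₂ ⊆ ℝ^k be polytopes in standard form and let f : ℝ^n → ℝ^k be an affine map with f(L₁) ⊆ L₂. Then f preserves the support preorder: for all x, y ∈ L₁ with supp(y) ⊆ supp(x), one has supp(f(y)) ⊆ supp(f(x)). Consequently, if y ∈ Conv(Vsupp(x)) (computed in L₁), then f(y) ∈ Conv(Vsupp(f(x))) (computed in L₂). -/

import Mathlib

/-- The support of a vector: the set of indices with nonzero coordinate. -/
def supp {n : ℕ} (x : Fin n → ℝ) : Set (Fin n) := {i | x i ≠ 0}

/-- A polytope in standard form: a bounded intersection of an affine subspace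
(given by linear equations `A x = b`) with the nonnegative orthant. -/
def StdForm {n : ℕ} (L : Set (Fin n → ℝ)) : Prop :=
  Bornology.IsBounded L ∧
    ∃ (k : ℕ) (A : Matrix (Fin k) (Fin n) ℝ) (b : Fin k → ℝ),
      L = {x | A.mulVec x = b ∧ ∀ i, 0 ≤ x i}

/-- The vertex support of `x` in `L`: the set of extreme points (vertices) of `L`
whose support is contained in the support of `x`. -/
def Vsupp {n : ℕ} (L : Set (Fin n → ℝ)) (x : Fin n → ℝ) : Set (Fin n → ℝ) :=
  {y ∈ Set.extremePoints ℝ L | supp y ⊆ supp x}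

section Helpers
open Filter Topology

lemma step_lemma {n m : ℕ} (A : Matrix (Fin m) (Fin n) ℝ) (b : Fin m → ℝ)
    {u d : Fin n → ℝ} (hu : A.mulVec u = b ∧ ∀ i, 0 ≤ u i)
    (hd : A.mulVec d = 0) (hs : ∀ i, u i = 0 → d i = 0) :
    ∃ ε > (0:ℝ), A.mulVec (u + ε • d) = b ∧ ∀ i, 0 ≤ (u + ε • d) i := by
  have hev : ∀ᶠ ε in 𝓝[>] (0:ℝ), ∀ i, 0 ≤ u i + ε * d i := by
    rw [eventually_all]
    intro i
    rcases eq_or_lt_of_le (hu.2 i) with h | h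
    · filter_upwards with ε
      rw [hs i h.symm, ← h]; simp
    · have hc : Filter.Tendsto (fun ε : ℝ => u i + ε * d i) (𝓝 0) (𝓝 (u i + 0 * d i)) := by
        exact (tendsto_const_nhds.add ((continuous_id.mul continuous_const).tendsto 0))
      have : ∀ᶠ ε in 𝓝 (0:ℝ), 0 < u i + ε * d i := by
        apply hc.eventually_const_lt; simpa using h
      exact (this.filter_mono nhdsWithin_le_nhds).mono fun ε h => h.le
  obtain ⟨ε, hε, hεpos⟩ := (hev.and self_mem_nhdsWithin).exists
  refine ⟨ε, hεpos, ?_, ?_⟩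
  · rw [Matrix.mulVec_add, Matrix.mulVec_smul, hu.1, hd, smul_zero, add_zero]
  · intro i; simpa using hε i

lemma vsupp_mono {n : ℕ} (L : Set (Fin n → ℝ)) {x y : Fin n → ℝ} (h : supp x ⊆ supp y) :
    Vsupp L x ⊆ Vsupp L y := fun v hv => ⟨hv.1, hv.2.trans h⟩

lemma mem_hull_vsupp {n : ℕ} {L : Set (Fin n → ℝ)} (hL : StdForm L) :
    ∀ w ∈ L, w ∈ convexHull ℝ (Vsupp L w) := by
  obtain ⟨hbdd, m, A, b, rfl⟩ := hL
  set L : Set (Fin n → ℝ) := {x | A.mulVec x = b ∧ ∀ i, 0 ≤ x i} with hLdef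
  -- closedness of L
  have hcont : Continuous fun x : Fin n → ℝ => A.mulVec x := by
    have := LinearMap.continuous_of_finiteDimensional (A.mulVecLin)
    exact this
  have hLclosed : IsClosed L := by
    have h1 : IsClosed {x : Fin n → ℝ | A.mulVec x = b} :=
      isClosed_eq hcont continuous_const
    have h2 : IsClosed {x : Fin n → ℝ | ∀ i, 0 ≤ x i} := by
      have : {x : Fin n → ℝ | ∀ i, 0 ≤ x i} = ⋂ i, {x | 0 ≤ x i} := by
        ext x; simp
      rw [this]
      exact isClosed_iInter fun i => isClosed_le continuous_const (continuous_apply i)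
    have : L = {x : Fin n → ℝ | A.mulVec x = b} ∩ {x | ∀ i, 0 ≤ x i} := rfl
    rw [this]; exact h1.inter h2
  obtain ⟨C, hC⟩ := hbdd.exists_norm_le
  -- strong induction on support cardinality
  suffices H : ∀ N : ℕ, ∀ w ∈ L, (Finset.univ.filter fun i => w i ≠ 0).card = N →
      w ∈ convexHull ℝ (Vsupp L w) by
    intro w hw; exact H _ w hw rfl
  intro N
  induction N using Nat.strong_induction_on with
  | _ N ih =>
  intro w hw hcard
  by_cases hext : w ∈ Set.extremePoints ℝ L
  · exact subset_convexHull ℝ _ ⟨hext, Set.Subset.rfl⟩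
  · rw [mem_extremePoints] at hext
    push_neg at hext
    obtain ⟨x₁, hx₁, x₂, hx₂, hseg, hne⟩ := hext hw
    obtain ⟨a, c, ha, hc, hac, hcomb⟩ := hseg
    have hx₁w : x₁ ≠ w := by
      intro h
      apply hne h
      have h3 : a • w + c • x₂ = w := h ▸ hcomb
      have h5 : c • x₂ = c • w := by
        funext i
        have h3i := congrFun h3 i
        simp only [Pi.add_apply, Pi.smul_apply, smul_eq_mul] at h3i ⊢
        linear_combination h3i - w i * hac
      exact smul_right_injective _ (ne_of_gt hc) h5
    set d : Fin n → ℝ := x₁ - w with hd_def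
    have hdne : d ≠ 0 := sub_ne_zero.2 hx₁w
    have hAd : A.mulVec d = 0 := by
      rw [hd_def, Matrix.mulVec_sub, hx₁.1, hw.1, sub_self]
    have hd0 : ∀ i, w i = 0 → d i = 0 := by
      intro i hwi
      have h1 : a * x₁ i + c * x₂ i = 0 := by
        have := congrFun hcomb i; simpa [hwi] using this
      have h2 : x₁ i = 0 := by
        nlinarith [hx₁.2 i, hx₂.2 i]
      simp [hd_def, h2, hwi]
    set T : Set ℝ := {t | w + t • d ∈ L} with hT_def
    have hmemT : ∀ t, t ∈ T ↔ w + t • d ∈ L := fun t => Iff.rfl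
    have h0T : (0:ℝ) ∈ T := by simp [hT_def, hw]
    have h1T : (1:ℝ) ∈ T := by
      have heq : w + (1:ℝ) • d = x₁ := by rw [hd_def]; module
      show w + (1:ℝ) • d ∈ L
      rw [heq]; exact hx₁
    have ht₂ : -(a/c) ∈ T := by
      have hc' : c ≠ 0 := ne_of_gt hc
      have hx₂eq : w + (-(a/c)) • d = x₂ := by
        have key : c • (w + (-(a/c)) • d) = c • x₂ := by
          have h6 : c • x₂ = w - a • x₁ := by rw [← hcomb]; module
          rw [h6, hd_def]
          funext i
          simp only [Pi.smul_apply, Pi.add_apply, Pi.sub_apply, smul_eq_mul]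
          field_simp
          linear_combination w i * hac
        exact smul_right_injective _ hc' key
      show w + (-(a/c)) • d ∈ L
      rw [hx₂eq]; exact hx₂
    have hTclosed : IsClosed T := by
      have : T = (fun t : ℝ => w + t • d) ⁻¹' L := rfl
      rw [this]
      exact hLclosed.preimage (continuous_const.add (continuous_id.smul continuous_const))
    have hTbdd : ∃ M : ℝ, ∀ t ∈ T, |t| ≤ M := by
      have hdnorm : 0 < ‖d‖ := norm_pos_iff.2 hdne
      refine ⟨(C + ‖w‖) / ‖d‖, fun t ht => ?_⟩
      have h1 : ‖w + t • d‖ ≤ C := hC _ ht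
      have h2 : ‖t • d‖ ≤ C + ‖w‖ := by
        have h3 := norm_sub_le (w + t • d) w
        rw [add_sub_cancel_left] at h3
        linarith
      rw [norm_smul, Real.norm_eq_abs] at h2
      rw [le_div_iff₀ hdnorm]
      linarith
    obtain ⟨M, hM⟩ := hTbdd
    have hTsub : T ⊆ Set.Icc (-M) M := fun t ht => abs_le.1 (hM t ht)
    have hTcomp : IsCompact T := (isCompact_Icc).of_isClosed_subset hTclosed hTsub
    have hTne : T.Nonempty := ⟨0, h0T⟩
    set tp := sSup T with htp_def
    set tm := sInf T with htm_def
    have htpT : tp ∈ T := hTcomp.sSup_mem hTne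
    have htmT : tm ∈ T := hTcomp.sInf_mem hTne
    have hbddA : BddAbove T := hTcomp.bddAbove
    have hbddB : BddBelow T := hTcomp.bddBelow
    have htp_pos : 0 < tp := lt_of_lt_of_le one_pos (le_csSup hbddA h1T)
    have htm_neg : tm < 0 := lt_of_le_of_lt (csInf_le hbddB ht₂)
      (neg_lt_zero.mpr (by positivity))
    set u : Fin n → ℝ := w + tp • d with hu_def
    set v : Fin n → ℝ := w + tm • d with hv_def
    have huL : u ∈ L := htpT
    have hvL : v ∈ L := htmT
    have hsupp_u : ∀ i, w i = 0 → u i = 0 := by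
      intro i h; simp [hu_def, h, hd0 i h]
    have hsupp_v : ∀ i, w i = 0 → v i = 0 := by
      intro i h; simp [hv_def, h, hd0 i h]
    -- strict support decrease for u
    have hstrict_u : ∃ i, w i ≠ 0 ∧ u i = 0 := by
      by_contra hcon
      push_neg at hcon
      have hs' : ∀ i, u i = 0 → d i = 0 := by
        intro i hui
        by_cases hwi : w i = 0
        · exact hd0 i hwi
        · exact absurd hui (hcon i hwi)
      obtain ⟨ε, hε, hcond⟩ := step_lemma A b huL hAd hs'
      have : tp + ε ∈ T := by
        have heq : w + (tp + ε) • d = u + ε • d := by rw [hu_def]; module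
        rw [hmemT, heq]; exact hcond
      have := le_csSup hbddA this
      linarith
    have hstrict_v : ∃ i, w i ≠ 0 ∧ v i = 0 := by
      by_contra hcon
      push_neg at hcon
      have hs' : ∀ i, v i = 0 → (-d) i = 0 := by
        intro i hvi
        by_cases hwi : w i = 0
        · simp [hd0 i hwi]
        · exact absurd hvi (hcon i hwi)
      have hAd' : A.mulVec (-d) = 0 := by rw [Matrix.mulVec_neg, hAd, neg_zero]
      obtain ⟨ε, hε, hcond⟩ := step_lemma A b hvL hAd' hs'
      have : tm - ε ∈ T := by
        have heq : w + (tm - ε) • d = v + ε • (-d) := by rw [hv_def]; module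
        rw [hmemT, heq]; exact hcond
      have := csInf_le hbddB this
      linarith
    -- cardinality decrease
    have hcard_lt : ∀ z : Fin n → ℝ, (∀ i, w i = 0 → z i = 0) → (∃ i, w i ≠ 0 ∧ z i = 0) →
        (Finset.univ.filter fun i => z i ≠ 0).card < N := by
      intro z hsub hz
      obtain ⟨i, hwi, hzi⟩ := hz
      rw [← hcard]
      apply Finset.card_lt_card
      have hsub' : (Finset.univ.filter fun j => z j ≠ 0) ⊆
          (Finset.univ.filter fun j => w j ≠ 0) := by
        intro j hj
        simp only [Finset.mem_filter, Finset.mem_univ, true_and] at hj ⊢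
        intro hwj; exact hj (hsub j hwj)
      rw [Finset.ssubset_iff_of_subset hsub']
      exact ⟨i, by simpa using hwi, by simpa using hzi⟩
    have hu_hull : u ∈ convexHull ℝ (Vsupp L u) :=
      ih _ (hcard_lt u hsupp_u hstrict_u) u huL rfl
    have hv_hull : v ∈ convexHull ℝ (Vsupp L v) :=
      ih _ (hcard_lt v hsupp_v hstrict_v) v hvL rfl
    have hmono_u : Vsupp L u ⊆ Vsupp L w := by
      apply vsupp_mono
      intro i hi
      simp only [supp, Set.mem_setOf_eq] at hi ⊢
      intro hwi; exact hi (hsupp_u i hwi)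
    have hmono_v : Vsupp L v ⊆ Vsupp L w := by
      apply vsupp_mono
      intro i hi
      simp only [supp, Set.mem_setOf_eq] at hi ⊢
      intro hwi; exact hi (hsupp_v i hwi)
    have hu_hull' : u ∈ convexHull ℝ (Vsupp L w) := convexHull_mono hmono_u hu_hull
    have hv_hull' : v ∈ convexHull ℝ (Vsupp L w) := convexHull_mono hmono_v hv_hull
    -- w is a convex combination of u and v
    have hden : 0 < tp - tm := by linarith
    have hden' : tp - tm ≠ 0 := ne_of_gt hden
    have hcomb_w : ((-tm) / (tp - tm)) • u + (tp / (tp - tm)) • v = w := by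
      rw [hu_def, hv_def]
      funext i
      simp only [Pi.add_apply, Pi.smul_apply, Pi.sub_apply, smul_eq_mul]
      field_simp
      ring
    have hfin : ((-tm) / (tp - tm)) • u + (tp / (tp - tm)) • v ∈ convexHull ℝ (Vsupp L w) :=
      (convex_convexHull ℝ (Vsupp L w)) hu_hull' hv_hull'
      (div_nonneg (by linarith : (0:ℝ) ≤ -tm) (by linarith : (0:ℝ) ≤ tp - tm))
      (div_nonneg (by linarith : (0:ℝ) ≤ tp) (by linarith : (0:ℝ) ≤ tp - tm))
      (by rw [← add_div, div_eq_one_iff_eq hden']; ring)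
    rw [hcomb_w] at hfin
    exact hfin

end Helpers

theorem stmt_4 {n k : ℕ} (L₁ : Set (Fin n → ℝ)) (L₂ : Set (Fin k → ℝ))
    (h₁ : StdForm L₁) (h₂ : StdForm L₂)
    (f : (Fin n → ℝ) →ᵃ[ℝ] (Fin k → ℝ)) (hf : ∀ y ∈ L₁, f y ∈ L₂) :
    (∀ x ∈ L₁, ∀ y ∈ L₁, supp y ⊆ supp x → supp (f y) ⊆ supp (f x)) ∧
      (∀ x ∈ L₁, ∀ y ∈ convexHull ℝ (Vsupp L₁ x),
        f y ∈ convexHull ℝ (Vsupp L₂ (f x))) := by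
  obtain ⟨hb₁, k₁, A₁, b₁, hL₁⟩ := id h₁
  obtain ⟨hb₂, k₂, A₂, b₂, hL₂⟩ := id h₂
  have part1 : ∀ x ∈ L₁, ∀ y ∈ L₁, supp y ⊆ supp x → supp (f y) ⊆ supp (f x) := by
    intro x hx y hy hsupp j hj
    simp only [supp, Set.mem_setOf_eq] at hj ⊢
    intro hfx
    apply hj
    have hx' : A₁.mulVec x = b₁ ∧ ∀ i, 0 ≤ x i := by rw [hL₁] at hx; exact hx
    have hy' : A₁.mulVec y = b₁ ∧ ∀ i, 0 ≤ y i := by rw [hL₁] at hy; exact hy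
    have hd : A₁.mulVec (x - y) = 0 := by rw [Matrix.mulVec_sub, hx'.1, hy'.1, sub_self]
    have hs : ∀ i, x i = 0 → (x - y) i = 0 := by
      intro i h0
      have hyi : y i = 0 := by
        by_contra hne
        exact (hsupp hne) h0
      simp [h0, hyi]
    obtain ⟨ε, hεpos, hz⟩ := step_lemma A₁ b₁ hx' hd hs
    set z := x + ε • (x - y) with hz_def
    have hzL : z ∈ L₁ := by rw [hL₁]; exact hz
    have hfz : f z = f x + ε • (f x - f y) := by
      have h1 : z = ε • (x - y) +ᵥ x := by rw [hz_def, vadd_eq_add, add_comm]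
      rw [h1, AffineMap.map_vadd, f.linear.map_smul]
      have h2 : f.linear (x - y) = f x - f y := f.linearMap_vsub x y
      rw [h2, vadd_eq_add, add_comm]
    have hfzL : f z ∈ L₂ := hf z hzL
    have hfyL : f y ∈ L₂ := hf y hy
    rw [hL₂] at hfzL hfyL
    have h3 : 0 ≤ f z j := hfzL.2 j
    have h4 : 0 ≤ f y j := hfyL.2 j
    have h5 : f z j = -(ε * f y j) := by
      have := congrFun hfz j
      simp only [Pi.add_apply, Pi.smul_apply, Pi.sub_apply, smul_eq_mul] at this
      rw [this, hfx]; ring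
    nlinarith
  refine ⟨part1, ?_⟩
  intro x hx y hy
  have himg : f y ∈ convexHull ℝ (f '' Vsupp L₁ x) := by
    rw [← AffineMap.image_convexHull]
    exact ⟨y, hy, rfl⟩
  refine convexHull_min ?_ (convex_convexHull ℝ _) himg
  rintro _ ⟨v, hv, rfl⟩
  have hvL : v ∈ L₁ := hv.1.1
  have h1 : supp (f v) ⊆ supp (f x) := part1 x hx v hvL hv.2
  have h2 : f v ∈ convexHull ℝ (Vsupp L₂ (f v)) := mem_hull_vsupp h₂ (f v) (hf v hvL)
  exact convexHull_mono (vsupp_mono _ h1) h2
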